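/- α-equivalence is captured by syntactic equality of translations: for ground αProlog terms t and u, ⊨ t ≈ u holds if and only if φ(t) = φ(u), where equality of Gᵐ terms is modulo αβη-conversion of λ-terms. -/

import Mathlib

/-! ### αProlog terms (name-restricted): t ::= a | X | (a b)·t | f(t⃗) | ⟨a⟩t.
Names, variables and function symbols are all modeled as natural numbers. -/

inductive ATerm : Type
  | name : ℕ → ATerm                 -- a name a
  | var  : ℕ → ATerm                 -- a first-order variable X
  | swp  : ℕ → ℕ → ATerm → ATerm     -- a swapping (a b)·t
  | fn   : ℕ → List ATerm → ATerm    -- f(t₁,...,tₙ)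
  | abs  : ℕ → ATerm → ATerm         -- a name-abstraction ⟨a⟩t

/-- Action of the swapping (a b) on a name. -/
def swapName (a b c : ℕ) : ℕ := if c = a then b else if c = b then a else c

/-- Applying the swapping (a b) to a term, as an operation: it renames names
everywhere (including in name-abstractions and suspended swappings) and leaves
variables unchanged ((a b)·X = X). -/
def ATerm.swapf (a b : ℕ) : ATerm → ATerm
  | .name c    => .name (swapName a b c)
  | .var X     => .var X
  | .swp c d t => .swp (swapName a b c) (swapName a b d) (ATerm.swapf a b t)
  | .fn f ts   => .fn f (ts.attach.map (fun x => ATerm.swapf a b x.1))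
  | .abs c t   => .abs (swapName a b c) (ATerm.swapf a b t)
decreasing_by
  all_goals simp_wf
  have := List.sizeOf_lt_of_mem x.2
  omega

/-- Evaluating away the syntactic swappings in a term. -/
def ATerm.eval : ATerm → ATerm
  | .name c    => .name c
  | .var X     => .var X
  | .swp a b t => (ATerm.eval t).swapf a b
  | .fn f ts   => .fn f (ts.attach.map (fun x => ATerm.eval x.1))
  | .abs c t   => .abs c (ATerm.eval t)
decreasing_by
  all_goals simp_wf
  have := List.sizeOf_lt_of_mem x.2
  omega

/-- Free variables of a term. -/
def ATerm.fv : ATerm → Finset ℕ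
  | .name _    => ∅
  | .var X     => {X}
  | .swp _ _ t => ATerm.fv t
  | .fn _ ts   => ts.attach.foldr (fun x s => ATerm.fv x.1 ∪ s) ∅
  | .abs _ t   => ATerm.fv t
decreasing_by
  all_goals simp_wf
  have := List.sizeOf_lt_of_mem x.2
  omega

/-- Names occurring in a term (name-abstraction is not a real binder, so the
name a occurs free in ⟨a⟩a). -/
def ATerm.names : ATerm → Finset ℕ
  | .name c    => {c}
  | .var _     => ∅
  | .swp a b t => {a} ∪ {b} ∪ ATerm.names t
  | .fn _ ts   => ts.attach.foldr (fun x s => ATerm.names x.1 ∪ s) ∅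
  | .abs c t   => {c} ∪ ATerm.names t
decreasing_by
  all_goals simp_wf
  have := List.sizeOf_lt_of_mem x.2
  omega

/-- A term is ground if it has no free variables. -/
def ATerm.Ground (t : ATerm) : Prop := t.fv = ∅

/-- (Possibly name-capturing) substitution of terms for variables. -/
def ATerm.subst (θ : ℕ → ATerm) : ATerm → ATerm
  | .name c    => .name c
  | .var X     => θ X
  | .swp a b t => .swp a b (ATerm.subst θ t)
  | .fn f ts   => .fn f (ts.attach.map (fun x => ATerm.subst θ x.1))
  | .abs c t   => .abs c (ATerm.subst θ t)
decreasing_by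
  all_goals simp_wf
  have := List.sizeOf_lt_of_mem x.2
  omega

/-- The freshness relation a # t, on (evaluated, swapping-free) ground nominal
terms; a variable contains no names. -/
inductive FreshA : ℕ → ATerm → Prop
  | name {a b : ℕ} : a ≠ b → FreshA a (.name b)
  | var {a X} : FreshA a (.var X)
  | fn {a f} {ts : List ATerm} : (∀ t ∈ ts, FreshA a t) → FreshA a (.fn f ts)
  | absSame {a t} : FreshA a (.abs a t)
  | absDiff {a b t} : a ≠ b → FreshA a t → FreshA a (.abs b t)

/-- α-equivalence t ≈ u on (evaluated, swapping-free) nominal terms. -/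
inductive AeqA : ATerm → ATerm → Prop
  | name (a : ℕ) : AeqA (.name a) (.name a)
  | var (X : ℕ) : AeqA (.var X) (.var X)
  | fn {f} {ts us : List ATerm} : List.Forall₂ AeqA ts us → AeqA (.fn f ts) (.fn f us)
  | absSame {a t u} : AeqA t u → AeqA (.abs a t) (.abs a u)
  | absDiff {a b t u} : a ≠ b → FreshA a u → AeqA t (u.swapf a b) →
      AeqA (.abs a t) (.abs b u)

/-- ⊨ a # t for ground terms t (evaluating suspended swappings first). -/
def ModelsFresh (a : ℕ) (t : ATerm) : Prop := FreshA a t.eval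

/-- ⊨ t ≈ u for ground terms t, u. -/
def ModelsEq (t u : ATerm) : Prop := AeqA t.eval u.eval

/-! ### αProlog goals and program clauses -/

/-- Goals: G ::= ⊤ | p(t⃗) | a # t | t ≈ u | G ∧ G' | G ∨ G' | ∃X.G | Иa.G. -/
inductive AGoal : Type
  | tt    : AGoal
  | atom  : ℕ → List ATerm → AGoal
  | fr    : ℕ → ATerm → AGoal          -- a # t
  | eq    : ATerm → ATerm → AGoal      -- t ≈ u
  | conj  : AGoal → AGoal → AGoal
  | disj  : AGoal → AGoal → AGoal
  | ex    : ℕ → AGoal → AGoal          -- ∃X.G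
  | nw    : ℕ → AGoal → AGoal          -- Иa.G

/-- Applying the swapping (a b) to a goal. -/
def AGoal.swapf (a b : ℕ) : AGoal → AGoal
  | .tt         => .tt
  | .atom p ts  => .atom p (ts.map (ATerm.swapf a b))
  | .fr c t     => .fr (swapName a b c) (t.swapf a b)
  | .eq t u     => .eq (t.swapf a b) (u.swapf a b)
  | .conj G G'  => .conj (AGoal.swapf a b G) (AGoal.swapf a b G')
  | .disj G G'  => .disj (AGoal.swapf a b G) (AGoal.swapf a b G')
  | .ex X G     => .ex X (AGoal.swapf a b G)
  | .nw c G     => .nw (swapName a b c) (AGoal.swapf a b G)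

/-- Free variables of a goal. -/
def AGoal.fv : AGoal → Finset ℕ
  | .tt        => ∅
  | .atom _ ts => ts.foldr (fun t s => t.fv ∪ s) ∅
  | .fr _ t    => t.fv
  | .eq t u    => t.fv ∪ u.fv
  | .conj G G' => AGoal.fv G ∪ AGoal.fv G'
  | .disj G G' => AGoal.fv G ∪ AGoal.fv G'
  | .ex X G    => AGoal.fv G \ {X}
  | .nw _ G    => AGoal.fv G

/-- Free names of a goal (Иa.G binds a). -/
def AGoal.names : AGoal → Finset ℕ
  | .tt        => ∅
  | .atom _ ts => ts.foldr (fun t s => t.names ∪ s) ∅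
  | .fr a t    => {a} ∪ t.names
  | .eq t u    => t.names ∪ u.names
  | .conj G G' => AGoal.names G ∪ AGoal.names G'
  | .disj G G' => AGoal.names G ∪ AGoal.names G'
  | .ex _ G    => AGoal.names G
  | .nw a G    => AGoal.names G \ {a}

/-- Substitution on goals (capture-avoiding for variable binders ∃X). -/
def AGoal.subst (θ : ℕ → ATerm) : AGoal → AGoal
  | .tt        => .tt
  | .atom p ts => .atom p (ts.map (ATerm.subst θ))
  | .fr a t    => .fr a (t.subst θ)
  | .eq t u    => .eq (t.subst θ) (u.subst θ)
  | .conj G G' => .conj (AGoal.subst θ G) (AGoal.subst θ G')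
  | .disj G G' => .disj (AGoal.subst θ G) (AGoal.subst θ G')
  | .ex X G    => .ex X (AGoal.subst (Function.update θ X (ATerm.var X)) G)
  | .nw a G    => .nw a (AGoal.subst θ G)

/-- A goal is ground if it has no free variables. -/
def AGoal.Ground (G : AGoal) : Prop := G.fv = ∅

/-- A program clause Иa⃗.∀X⃗.[p(t⃗) ⊢ G]. -/
structure AClause : Type where
  newNames : List ℕ       -- a⃗
  vars     : List ℕ       -- X⃗
  pred     : ℕ            -- p
  args     : List ATerm   -- t⃗
  body     : AGoal        -- G

/-- A clause is well-formed (closed) if all its free variables are among X⃗ and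
all its free names are among a⃗. -/
def AClause.WF (C : AClause) : Prop :=
  (∀ t ∈ C.args, ↑t.fv ⊆ (C.vars : List ℕ).toFinset ∧
      ↑t.names ⊆ (C.newNames : List ℕ).toFinset) ∧
  C.body.fv ⊆ C.vars.toFinset ∧ C.body.names ⊆ C.newNames.toFinset

/-- A permutation of names, given as a composition of (zero or more) swappings. -/
abbrev NPerm : Type := List (ℕ × ℕ)

/-- Applying a permutation to a term. -/
def NPerm.appT (π : NPerm) (t : ATerm) : ATerm :=
  π.foldr (fun p t => t.swapf p.1 p.2) t

/-- Applying a permutation to a goal. -/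
def NPerm.appG (π : NPerm) (G : AGoal) : AGoal :=
  π.foldr (fun p G => G.swapf p.1 p.2) G

/-- A substitution is ground on a given list of variables and the identity
elsewhere. -/
def GroundOn (θ : ℕ → ATerm) (Xs : List ℕ) : Prop :=
  (∀ X ∈ Xs, (θ X).Ground) ∧ ∀ X, X ∉ Xs → θ X = ATerm.var X

/-- αProlog provability Δ ⟹ G (Figure 2 of the paper). -/
inductive AProv (Δ : Set AClause) : AGoal → Prop
  | tt : AProv Δ .tt
  | fr {a t} : ModelsFresh a t → AProv Δ (.fr a t)
  | eq {t u} : ModelsEq t u → AProv Δ (.eq t u)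
  | conj {G G'} : AProv Δ G → AProv Δ G' → AProv Δ (.conj G G')
  | disjL {G G'} : AProv Δ G → AProv Δ (.disj G G')
  | disjR {G G'} : AProv Δ G' → AProv Δ (.disj G G')
  | ex {X G} (t : ATerm) : t.Ground →
      AProv Δ (G.subst (Function.update ATerm.var X t)) → AProv Δ (.ex X G)
  | nw {a G} : AProv Δ G → AProv Δ (.nw a G)
  | backchain {ts : List ATerm} (C : AClause) (π : NPerm) (θ : ℕ → ATerm) :
      C ∈ Δ → GroundOn θ C.vars →
      List.Forall₂ (fun t u => ModelsEq t u) ts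
        (C.args.map (fun u => π.appT (u.subst θ))) →
      AProv Δ (π.appG (C.body.subst θ)) →
      AProv Δ (.atom C.pred ts)

/-! ### Gᵐ terms.
Gᵐ terms (in βη-long raised form): nominal constants, variables raised over
lists of nominal constants (X a₁ ... aₙ), applied function constants, and
λ-abstractions over nominal constants (written with a concrete name for the
bound nominal constant, so terms are compared up to α-convertibility below). -/

inductive LTerm : Type
  | nom : ℕ → LTerm                  -- a nominal constant
  | var : ℕ → List ℕ → LTerm         -- a variable X applied to nominal constants a⃗
  | fn  : ℕ → List LTerm → LTerm     -- f t₁ ... tₙ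
  | lam : ℕ → LTerm → LTerm          -- λa.t, binding the nominal constant a

/-- Applying the swapping (a b) of nominal constants to a Gᵐ term; it also acts
on the nominal constants over which variables are raised and on binders. -/
def LTerm.swapf (a b : ℕ) : LTerm → LTerm
  | .nom c   => .nom (swapName a b c)
  | .var X l => .var X (l.map (swapName a b))
  | .fn f ts => .fn f (ts.attach.map (fun x => LTerm.swapf a b x.1))
  | .lam c t => .lam (swapName a b c) (LTerm.swapf a b t)
decreasing_by
  all_goals simp_wf
  have := List.sizeOf_lt_of_mem x.2
  omega

/-- Renaming the nominal constants of a Gᵐ term along a function. -/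
def LTerm.rename (ρ : ℕ → ℕ) : LTerm → LTerm
  | .nom c   => .nom (ρ c)
  | .var X l => .var X (l.map ρ)
  | .fn f ts => .fn f (ts.attach.map (fun x => LTerm.rename ρ x.1))
  | .lam c t => .lam (ρ c) (LTerm.rename ρ t)
decreasing_by
  all_goals simp_wf
  have := List.sizeOf_lt_of_mem x.2
  omega

/-- Free variables of a Gᵐ term. -/
def LTerm.fv : LTerm → Finset ℕ
  | .nom _   => ∅
  | .var X _ => {X}
  | .fn _ ts => ts.attach.foldr (fun x s => LTerm.fv x.1 ∪ s) ∅
  | .lam _ t => LTerm.fv t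
decreasing_by
  all_goals simp_wf
  have := List.sizeOf_lt_of_mem x.2
  omega

/-- The support of a Gᵐ term: the nominal constants occurring in it
(λ genuinely binds its nominal constant). -/
def LTerm.supp : LTerm → Finset ℕ
  | .nom c   => {c}
  | .var _ l => l.toFinset
  | .fn _ ts => ts.attach.foldr (fun x s => LTerm.supp x.1 ∪ s) ∅
  | .lam c t => LTerm.supp t \ {c}
decreasing_by
  all_goals simp_wf
  have := List.sizeOf_lt_of_mem x.2
  omega

/-- A Gᵐ term is closed if it has no free variables. -/
def LTerm.Closed (t : LTerm) : Prop := t.fv = ∅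

/-- a is fresh for (does not occur in the support of) a Gᵐ term. -/
inductive LFresh : ℕ → LTerm → Prop
  | nom {a c} : a ≠ c → LFresh a (.nom c)
  | var {a X l} : a ∉ l → LFresh a (.var X l)
  | fn {a f ts} : (∀ t ∈ ts, LFresh a t) → LFresh a (.fn f ts)
  | lamSame {a t} : LFresh a (.lam a t)
  | lamDiff {a c t} : a ≠ c → LFresh a t → LFresh a (.lam c t)

/-- Equality of Gᵐ terms modulo λ-conversion.  Terms are kept in βη-long raised
normal form, so λ-conversion amounts to α-convertibility of λ-binders. -/
inductive LAeq : LTerm → LTerm → Prop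
  | nom (c : ℕ) : LAeq (.nom c) (.nom c)
  | var (X : ℕ) (l : List ℕ) : LAeq (.var X l) (.var X l)
  | fn {f} {ts us : List LTerm} : List.Forall₂ LAeq ts us → LAeq (.fn f ts) (.fn f us)
  | lamSame {c t u} : LAeq t u → LAeq (.lam c t) (.lam c u)
  | lamDiff {c d t u} : c ≠ d → LFresh c u → LAeq t (u.swapf c d) →
      LAeq (.lam c t) (.lam d u)

/-- A substitution for Gᵐ variables: X ↦ λz⃗.u, recorded as the pair (z⃗, u)
(or none, meaning X is left untouched). -/
abbrev LSub : Type := ℕ → Option (List ℕ × LTerm)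

/-- Applying a substitution to a Gᵐ term, β-reducing on the fly: an occurrence
X a⃗ with X ↦ λz⃗.u becomes u with z⃗ renamed to a⃗. -/
def LTerm.subst (σ : LSub) : LTerm → LTerm
  | .nom c   => .nom c
  | .var X l =>
      match σ X with
      | none => .var X l
      | some (zs, u) => u.rename (fun n => ((zs.zip l).lookup n).getD n)
  | .fn f ts => .fn f (ts.attach.map (fun x => LTerm.subst σ x.1))
  | .lam c t => .lam c (LTerm.subst σ t)
decreasing_by
  all_goals simp_wf
  have := List.sizeOf_lt_of_mem x.2
  omega

/-! ### The translation φ on terms -/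

/-- The translation φ of αProlog terms into Gᵐ terms, parametrized by the
raising assignment ar giving, for each variable X, the list of names over
which X is raised: φ(a) = a, φ(X a⃗) = X a⃗, φ((a b)·t) = (a b)·φ(t),
φ(f(t⃗)) = f φ(t⃗), φ(⟨a⟩t) = λa.φ(t). -/
def phiT (ar : ℕ → List ℕ) : ATerm → LTerm
  | .name a    => .nom a
  | .var X     => .var X (ar X)
  | .swp a b t => (phiT ar t).swapf a b
  | .fn f ts   => .fn f (ts.attach.map (fun x => phiT ar x.1))
  | .abs a t   => .lam a (phiT ar t)
decreasing_by
  all_goals simp_wf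
  have := List.sizeOf_lt_of_mem x.2
  omega

/-- The translation φ(θ) of an αProlog substitution: each variable X with
θ(X) ≠ X is sent to λa⃗.φ(θ(X)) where a⃗ is the raising list of X. -/
noncomputable def phiSub (ar : ℕ → List ℕ) (θ : ℕ → ATerm) : LSub :=
  fun X => open Classical in
    if θ X = ATerm.var X then none else some (ar X, phiT ar (θ X))

/-- The support of a ground αProlog term t: the names a with ¬(a # t). -/
def ASupp (t : ATerm) : Set ℕ := {a | ¬ FreshA a t.eval}

/-! ### Gᵐ formulas and the translation of goals -/

/-- The predicate symbol reserved for the distinguished predicate fresh. -/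
def freshP : ℕ := 0

/-- Gᵐ formulas: B ::= ⊤ | p t⃗ | t = u | B ∧ C | B ∨ C | ∃x.B | ∇z.B
(∃ binds a variable by name, ∇ binds a nominal constant by name). -/
inductive GForm : Type
  | top  : GForm
  | atom : ℕ → List LTerm → GForm
  | eq   : LTerm → LTerm → GForm
  | conj : GForm → GForm → GForm
  | disj : GForm → GForm → GForm
  | exi  : ℕ → GForm → GForm
  | nab  : ℕ → GForm → GForm

/-- Applying the swapping (a b) of nominal constants to a Gᵐ formula. -/
def GForm.swapf (a b : ℕ) : GForm → GForm
  | .top       => .top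
  | .atom p ts => .atom p (ts.map (LTerm.swapf a b))
  | .eq t u    => .eq (t.swapf a b) (u.swapf a b)
  | .conj B C  => .conj (GForm.swapf a b B) (GForm.swapf a b C)
  | .disj B C  => .disj (GForm.swapf a b B) (GForm.swapf a b C)
  | .exi X B   => .exi X (GForm.swapf a b B)
  | .nab c B   => .nab (swapName a b c) (GForm.swapf a b B)

/-- Renaming nominal constants in a Gᵐ formula. -/
def GForm.rename (ρ : ℕ → ℕ) : GForm → GForm
  | .top       => .top
  | .atom p ts => .atom p (ts.map (LTerm.rename ρ))
  | .eq t u    => .eq (t.rename ρ) (u.rename ρ)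
  | .conj B C  => .conj (GForm.rename ρ B) (GForm.rename ρ C)
  | .disj B C  => .disj (GForm.rename ρ B) (GForm.rename ρ C)
  | .exi X B   => .exi X (GForm.rename ρ B)
  | .nab c B   => .nab (ρ c) (GForm.rename ρ B)

/-- The support of a Gᵐ formula (∇ binds its nominal constant). -/
def GForm.supp : GForm → Finset ℕ
  | .top       => ∅
  | .atom _ ts => ts.foldr (fun t s => t.supp ∪ s) ∅
  | .eq t u    => t.supp ∪ u.supp
  | .conj B C  => GForm.supp B ∪ GForm.supp C
  | .disj B C  => GForm.supp B ∪ GForm.supp C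
  | .exi _ B   => GForm.supp B
  | .nab c B   => GForm.supp B \ {c}

/-- Applying a substitution to a Gᵐ formula (bound variables are not
substituted for). -/
def GForm.subst (σ : LSub) : GForm → GForm
  | .top       => .top
  | .atom p ts => .atom p (ts.map (LTerm.subst σ))
  | .eq t u    => .eq (t.subst σ) (u.subst σ)
  | .conj B C  => .conj (GForm.subst σ B) (GForm.subst σ C)
  | .disj B C  => .disj (GForm.subst σ B) (GForm.subst σ C)
  | .exi X B   => .exi X (GForm.subst (Function.update σ X none) B)
  | .nab c B   => .nab c (GForm.subst σ B)

/-- Equality of Gᵐ formulas modulo λ-conversion of the terms occurring in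
them. -/
inductive FAeq : GForm → GForm → Prop
  | top : FAeq .top .top
  | atom {p ts us} : List.Forall₂ LAeq ts us → FAeq (.atom p ts) (.atom p us)
  | eq {t t' u u'} : LAeq t t' → LAeq u u' → FAeq (.eq t u) (.eq t' u')
  | conj {B B' C C'} : FAeq B B' → FAeq C C' → FAeq (.conj B C) (.conj B' C')
  | disj {B B' C C'} : FAeq B B' → FAeq C C' → FAeq (.disj B C) (.disj B' C')
  | exi {X B B'} : FAeq B B' → FAeq (.exi X B) (.exi X B')
  | nab {c B B'} : FAeq B B' → FAeq (.nab c B) (.nab c B')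

/-- Prefixing a formula with ∇-quantifiers for a list of nominal constants. -/
def nablas (l : List ℕ) (B : GForm) : GForm := l.foldr .nab B

/-- The translation φ_{a⃗} on goals (Figure 3 of the paper), parametrized by
the ambient raising assignment ar and the list a⃗ of names being pushed down:
atomic, freshness and equality goals get the ∇a⃗ prefix, ∃X.G raises X over a⃗
(recorded by updating ar at X), and Иb.G adds b to a⃗. -/
def phiG (ar : ℕ → List ℕ) (as : List ℕ) : AGoal → GForm
  | .tt        => .top
  | .atom p ts => nablas as (.atom p (ts.map (phiT ar)))
  | .fr a t    => nablas as (.atom freshP [.nom a, phiT ar t])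
  | .eq t u    => nablas as (.eq (phiT ar t) (phiT ar u))
  | .conj G G' => .conj (phiG ar as G) (phiG ar as G')
  | .disj G G' => .disj (phiG ar as G) (phiG ar as G')
  | .ex X G    => .exi X (phiG (Function.update ar X as) as G)
  | .nw b G    => phiG ar (as ++ [b]) G

/-- The support of an αProlog substitution θ: the names supporting some θ(X). -/
def SubSupp (θ : ℕ → ATerm) : Set ℕ := {a | ∃ X, a ∈ ASupp (θ X)}

/-! ### Gᵐ provability -/

/-- A definitional clause ∀x⃗.[(∇z⃗. p u⃗) ≜ B] for a predicate, presented by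
its set of instances: `inst us B'` holds when, for some choice of distinct
nominal constants z⃗ for the ∇-bound variables and of closed terms x⃗θ (with
supp(x⃗θ) ∩ {z⃗} = ∅) for the universal variables, the instantiated head is
p u⃗θ with u⃗θ = us and the instantiated body Bθ is B'. These conditions are
baked into the `inst` relation of each particular clause. -/
structure DefClause : Type where
  pred : ℕ
  inst : List LTerm → GForm → Prop

/-- Gᵐ provability ⟹ B from a set D of definitional clauses
(Figure 4 of the paper). -/
inductive GProv (D : Set DefClause) : GForm → Prop
  | top : GProv D .top
  | eq {t u} : LAeq t u → GProv D (.eq t u)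
  | conj {B C} : GProv D B → GProv D C → GProv D (.conj B C)
  | disjL {B C} : GProv D B → GProv D (.disj B C)
  | disjR {B C} : GProv D C → GProv D (.disj B C)
  | exi {X B} (zs : List ℕ) (u : LTerm) : u.Closed →
      GProv D (B.subst (fun Y => if Y = X then some (zs, u) else none)) →
      GProv D (.exi X B)
  | nab {a B} (b : ℕ) : b ∉ GForm.supp (.nab a B) →
      GProv D (B.swapf a b) → GProv D (.nab a B)
  | defR {ts : List LTerm} (c : DefClause) (us : List LTerm) (B : GForm) :
      c ∈ D → c.inst us B → List.Forall₂ LAeq ts us →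
      GProv D B → GProv D (.atom c.pred ts)

/-- The definitional clause ∀x.[(∇z. fresh z x) ≜ ⊤] for the distinguished
predicate fresh. -/
def freshClause : DefClause where
  pred := freshP
  inst := fun us B =>
    ∃ (z : ℕ) (u : LTerm), us = [.nom z, u] ∧ u.Closed ∧ z ∉ u.supp ∧ B = .top

section AuxAeqPhi

/-- Attach-map simplification for our recursive definitions. -/
lemma attach_map_eq {α β : Type*} (l : List α) (f : α → β) :
    l.attach.map (fun x => f x.1) = l.map f := by simp

/-- αProlog terms without suspended swappings. -/
inductive NoSwp : ATerm → Prop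
  | name (a : ℕ) : NoSwp (.name a)
  | var (X : ℕ) : NoSwp (.var X)
  | fn {f ts} : (∀ t ∈ ts, NoSwp t) → NoSwp (.fn f ts)
  | abs (a : ℕ) {t} : NoSwp t → NoSwp (.abs a t)

lemma noSwp_swapf {t : ATerm} (h : NoSwp t) (a b : ℕ) : NoSwp (t.swapf a b) := by
  induction h with
  | name c => simp only [ATerm.swapf]; exact NoSwp.name _
  | var X => simp only [ATerm.swapf]; exact NoSwp.var _
  | fn _ ih =>
    simp only [ATerm.swapf, attach_map_eq]
    refine NoSwp.fn ?_
    intro s hs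
    simp only [List.mem_map] at hs
    obtain ⟨x, hx, rfl⟩ := hs
    exact ih x hx
  | abs c _ ih => simp only [ATerm.swapf]; exact NoSwp.abs _ ih

lemma noSwp_eval (t : ATerm) : NoSwp t.eval := by
  induction t using ATerm.eval.induct with
  | case1 c => simp only [ATerm.eval]; exact NoSwp.name _
  | case2 X => simp only [ATerm.eval]; exact NoSwp.var _
  | case3 a b t ih => simp only [ATerm.eval]; exact noSwp_swapf ih a b
  | case4 f ts ih =>
    simp only [ATerm.eval, attach_map_eq]
    refine NoSwp.fn ?_
    intro s hs
    simp only [List.mem_map] at hs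
    obtain ⟨x, hx, rfl⟩ := hs
    exact ih ⟨x, hx⟩
  | case5 c t ih => simp only [ATerm.eval]; exact NoSwp.abs _ ih

set_option maxHeartbeats 1000000 in
lemma swapName_equivar (a b c d e : ℕ) :
    swapName (swapName a b c) (swapName a b d) (swapName a b e)
      = swapName a b (swapName c d e) := by
  simp only [swapName]
  split_ifs <;> omega

/-- Equivariance of swapping on Gᵐ terms. -/
lemma lswapf_equivar (a b c d : ℕ) (s : LTerm) :
    LTerm.swapf (swapName a b c) (swapName a b d) (s.swapf a b)
      = (s.swapf c d).swapf a b := by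
  induction s using LTerm.swapf.induct with
  | case1 e => simp only [LTerm.swapf, swapName_equivar]
  | case2 X l =>
    simp only [LTerm.swapf, List.map_map]
    congr 1
    exact List.map_congr_left fun e _ => swapName_equivar a b c d e
  | case3 f ts ih =>
    simp only [LTerm.swapf, attach_map_eq, List.map_map]
    congr 1
    refine List.map_congr_left fun s hs => ?_
    exact ih ⟨s, hs⟩
  | case4 e s ih => simp only [LTerm.swapf, swapName_equivar, ih]

/-- With the empty raising assignment, φ commutes with swapping. -/
lemma phi_swapf (a b : ℕ) (t : ATerm) :
    phiT (fun _ => []) (t.swapf a b) = (phiT (fun _ => []) t).swapf a b := by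
  induction t using phiT.induct with
  | case1 c => simp only [ATerm.swapf, phiT, LTerm.swapf]
  | case2 X => simp only [ATerm.swapf, phiT, LTerm.swapf, List.map_nil]
  | case3 c d t ih =>
    simp only [ATerm.swapf, phiT, ih, lswapf_equivar]
  | case4 f ts ih =>
    simp only [ATerm.swapf, phiT, LTerm.swapf, attach_map_eq, List.map_map]
    congr 1
    refine List.map_congr_left fun s hs => ?_
    exact ih ⟨s, hs⟩
  | case5 c t ih => simp only [ATerm.swapf, phiT, LTerm.swapf, ih]

/-- φ ignores suspended swappings: φ(t.eval) = φ(t). -/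
lemma phi_eval (t : ATerm) :
    phiT (fun _ => []) t.eval = phiT (fun _ => []) t := by
  induction t using ATerm.eval.induct with
  | case1 c => simp only [ATerm.eval]
  | case2 X => simp only [ATerm.eval]
  | case3 a b t ih =>
    simp only [ATerm.eval, phi_swapf, ih]
    simp only [phiT]
  | case4 f ts ih =>
    simp only [ATerm.eval, phiT, attach_map_eq, List.map_map]
    congr 1
    refine List.map_congr_left fun s hs => ?_
    exact ih ⟨s, hs⟩
  | case5 c t ih => simp only [ATerm.eval, phiT, ih]

lemma fresh_fwd {a : ℕ} {t : ATerm} (h : FreshA a t) :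
    LFresh a (phiT (fun _ => []) t) := by
  induction h with
  | name hne => simp only [phiT]; exact LFresh.nom hne
  | var => simp only [phiT]; exact LFresh.var List.not_mem_nil
  | fn _ ih =>
    simp only [phiT, attach_map_eq]
    refine LFresh.fn ?_
    intro s hs
    simp only [List.mem_map] at hs
    obtain ⟨x, hx, rfl⟩ := hs
    exact ih x hx
  | absSame => simp only [phiT]; exact LFresh.lamSame
  | absDiff hne _ ih => simp only [phiT]; exact LFresh.lamDiff hne ih

lemma fresh_bwd {a : ℕ} {t : ATerm} (hn : NoSwp t)
    (h : LFresh a (phiT (fun _ => []) t)) : FreshA a t := by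
  induction hn with
  | name c =>
    simp only [phiT] at h
    cases h with | nom hne => exact FreshA.name hne
  | var X => exact FreshA.var
  | fn _ ih =>
    simp only [phiT, attach_map_eq] at h
    cases h with
    | fn hall =>
      exact FreshA.fn fun s hs => ih s hs (hall _ (List.mem_map_of_mem hs))
  | abs c _ ih =>
    simp only [phiT] at h
    cases h with
    | lamSame => exact FreshA.absSame
    | lamDiff hne h' => exact FreshA.absDiff hne (ih h')

lemma aeq_fwd_aux (n : ℕ) : ∀ t u : ATerm, sizeOf t ≤ n → AeqA t u →
    LAeq (phiT (fun _ => []) t) (phiT (fun _ => []) u) := by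
  induction n with
  | zero =>
    intro t u hs
    cases t <;> simp at hs
  | succ n ih =>
    intro t u hs h
    cases h with
    | name a => simp only [phiT]; exact LAeq.nom a
    | var X => simp only [phiT]; exact LAeq.var X []
    | @fn f ts us hall =>
      simp only [phiT, attach_map_eq]
      refine LAeq.fn ?_
      rw [List.forall₂_map_left_iff, List.forall₂_map_right_iff]
      have hsz : ∀ x ∈ ts, sizeOf x ≤ n := by
        intro x hx
        have := List.sizeOf_lt_of_mem hx
        simp at hs
        omega
      clear hs
      induction hall with
      | nil => exact List.Forall₂.nil
      | @cons t' u' ts' us' h1 _ ih2 =>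
        refine List.Forall₂.cons (ih t' u' (hsz t' (by simp)) h1) ?_
        exact ih2 fun x hx => hsz x (by simp [hx])
    | @absSame a t' u' h1 =>
      simp only [phiT]
      have hsz : sizeOf t' ≤ n := by simp at hs; omega
      exact LAeq.lamSame (ih t' u' hsz h1)
    | @absDiff a b t' u' hne hf h1 =>
      simp only [phiT]
      have hsz : sizeOf t' ≤ n := by simp at hs; omega
      have := ih t' (u'.swapf a b) hsz h1
      rw [phi_swapf] at this
      exact LAeq.lamDiff hne (fresh_fwd hf) this

lemma aeq_bwd_aux (n : ℕ) : ∀ t u : ATerm, sizeOf t ≤ n → NoSwp t → NoSwp u →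
    LAeq (phiT (fun _ => []) t) (phiT (fun _ => []) u) → AeqA t u := by
  induction n with
  | zero =>
    intro t u hs
    cases t <;> simp at hs
  | succ n ih =>
    intro t u hs ht hu hL
    cases ht with
    | name a =>
      cases hu <;> simp only [phiT] at hL <;> cases hL
      exact AeqA.name _
    | var X =>
      cases hu <;> simp only [phiT] at hL <;> cases hL
      exact AeqA.var _
    | @fn f ts hts =>
      cases hu with
      | name b => simp only [phiT] at hL; cases hL
      | var Y => simp only [phiT] at hL; cases hL
      | abs b u' => simp only [phiT] at hL; cases hL
      | @fn g us hus =>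
        simp only [phiT, attach_map_eq] at hL
        cases hL with
        | fn hall =>
          refine AeqA.fn ?_
          rw [List.forall₂_map_left_iff, List.forall₂_map_right_iff] at hall
          have hsz : ∀ x ∈ ts, sizeOf x ≤ n := by
            intro x hx
            have := List.sizeOf_lt_of_mem hx
            simp at hs
            omega
          clear hs
          induction hall with
          | nil => exact List.Forall₂.nil
          | @cons t' u' ts' us' h1 _ ih2 =>
            refine List.Forall₂.cons
              (ih t' u' (hsz t' (by simp)) (hts t' (by simp))
                (hus u' (by simp)) h1) ?_
            exact ih2 (fun x hx => hts x (by simp [hx]))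
              (fun x hx => hus x (by simp [hx]))
              (fun x hx => hsz x (by simp [hx]))
    | @abs a t' ht' =>
      cases hu with
      | name b => simp only [phiT] at hL; cases hL
      | var Y => simp only [phiT] at hL; cases hL
      | fn hus => simp only [phiT] at hL; cases hL
      | @abs b u' hu' =>
        simp only [phiT] at hL
        have hsz : sizeOf t' ≤ n := by simp at hs; omega
        cases hL with
        | lamSame h1 => exact AeqA.absSame (ih t' u' hsz ht' hu' h1)
        | lamDiff hne hf h1 =>
          refine AeqA.absDiff hne (fresh_bwd hu' hf) ?_
          rw [← phi_swapf] at h1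
          exact ih t' (u'.swapf a b) hsz ht' (noSwp_swapf hu' a b) h1

end AuxAeqPhi

/-- α-equivalence is captured by equality of translations: for
ground αProlog terms t and u, ⊨ t ≈ u holds iff φ(t) = φ(u), equality of Gᵐ
terms being modulo λ-conversion (here α-convertibility, terms being kept in
βη-long form). -/
theorem aeq_iff_phi_eq (t u : ATerm) (ht : t.Ground) (hu : u.Ground) :
    ModelsEq t u ↔ LAeq (phiT (fun _ => []) t) (phiT (fun _ => []) u) := by
  constructor
  · intro h
    have := aeq_fwd_aux (sizeOf t.eval) _ _ le_rfl h
    rwa [phi_eval, phi_eval] at this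
  · intro h
    rw [← phi_eval t, ← phi_eval u] at h
    exact aeq_bwd_aux (sizeOf t.eval) _ _ le_rfl (noSwp_eval t) (noSwp_eval u) h
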